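/- Let x_1, …, x_m ∈ ℝ^d and let p_1, …, p_m be nonnegative real numbers with ∑_{i=1}^m p_i ≤ 1; set p_0 = 1 − ∑_{i=1}^m p_i. Then ∑_{i=1}^m p_i x_i x_iᵀ − ∑_{i=1}^m ∑_{j=1}^m p_i p_j x_i x_jᵀ ⪰ ∑_{i=1}^m p_i p_0 x_i x_iᵀ, i.e., the difference of the left-hand side and the right-hand side is a positive semidefinite d×d matrix. -/

import Mathlib

open Matrix

private lemma quadHelper {d m : ℕ} (y : Fin d → ℝ) (c : Fin m → ℝ) (u v : Fin m → Fin d → ℝ) :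
    ∑ k, y k * ∑ l, (∑ i, c i * (u i k * v i l)) * y l
      = ∑ i, c i * ((∑ k, u i k * y k) * (∑ l, v i l * y l)) := by
  have h1 : ∀ k, (∑ l, (∑ i, c i * (u i k * v i l)) * y l)
      = ∑ i, c i * u i k * (∑ l, v i l * y l) := by
    intro k
    simp only [Finset.sum_mul]
    rw [Finset.sum_comm]
    refine Finset.sum_congr rfl fun i _ => ?_
    rw [Finset.mul_sum]
    exact Finset.sum_congr rfl fun l _ => by ring
  simp only [h1, Finset.mul_sum]
  rw [Finset.sum_comm]
  refine Finset.sum_congr rfl fun i _ => ?_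
  rw [Finset.sum_comm]
  refine Finset.sum_congr rfl fun l _ => ?_
  simp only [Finset.sum_mul, Finset.mul_sum]
  exact Finset.sum_congr rfl fun k _ => by ring

/-- Lower bound on the Hessian of the MNL negative log-likelihood:
`∑ᵢ pᵢ xᵢxᵢᵀ − ∑ᵢ∑ⱼ pᵢpⱼ xᵢxⱼᵀ ⪰ ∑ᵢ pᵢ p₀ xᵢxᵢᵀ` where `p₀ = 1 − ∑ᵢ pᵢ`. -/
theorem stmt1 {d m : ℕ} (x : Fin m → Fin d → ℝ) (p : Fin m → ℝ)
    (hp0 : ∀ i, 0 ≤ p i) (hp1 : ∑ i, p i ≤ 1) :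
    ((∑ i, p i • vecMulVec (x i) (x i)
        - ∑ i, ∑ j, (p i * p j) • vecMulVec (x i) (x j))
      - ∑ i, (p i * (1 - ∑ j, p j)) • vecMulVec (x i) (x i)).PosSemidef := by
  rw [posSemidef_iff_dotProduct_mulVec]
  constructor
  · ext k l
    simp only [conjTranspose_apply, Matrix.sub_apply, Matrix.sum_apply, Matrix.smul_apply,
      vecMulVec_apply, smul_eq_mul, star_trivial]
    have hsym : ∑ i, ∑ j, p i * p j * (x i l * x j k)
        = ∑ i, ∑ j, p i * p j * (x i k * x j l) := by
      rw [Finset.sum_comm]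
      exact Finset.sum_congr rfl fun i _ => Finset.sum_congr rfl fun j _ => by ring
    have h1 : ∑ i, p i * (x i l * x i k) = ∑ i, p i * (x i k * x i l) :=
      Finset.sum_congr rfl fun i _ => by ring
    have h3 : ∑ i, p i * (1 - ∑ j, p j) * (x i l * x i k)
        = ∑ i, p i * (1 - ∑ j, p j) * (x i k * x i l) :=
      Finset.sum_congr rfl fun i _ => by ring
    rw [hsym, h1, h3]
  · intro y
    simp only [star_trivial, dotProduct, mulVec, dotProduct, Matrix.sub_apply, Matrix.sum_apply,
      Matrix.smul_apply, vecMulVec_apply, smul_eq_mul, sub_mul, Finset.sum_sub_distrib, mul_sub]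
    set a : Fin m → ℝ := fun i => ∑ k, x i k * y k with ha
    have hmid0 : ∀ (k l : Fin d), (∑ i, ∑ j, p i * p j * (x i k * x j l))
        = ∑ i, p i * (x i k * (∑ j, p j * x j l)) := by
      intro k l
      refine Finset.sum_congr rfl fun i _ => ?_
      rw [Finset.mul_sum, Finset.mul_sum]
      exact Finset.sum_congr rfl fun j _ => by ring
    simp only [hmid0]
    have H1 : ∑ k, y k * ∑ l, (∑ i, p i * (x i k * x i l)) * y l
        = ∑ i, p i * (a i * a i) := quadHelper y p x x
    have H2 : ∑ k, y k * ∑ l, (∑ i, p i * (x i k * (∑ j, p j * x j l))) * y l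
        = ∑ i, p i * (a i * (∑ l, (∑ j, p j * x j l) * y l)) :=
      quadHelper y p x (fun _ l => ∑ j, p j * x j l)
    have H3 : ∑ k, y k * ∑ l, (∑ i, p i * 1 * (x i k * x i l)) * y l
        = ∑ i, p i * 1 * (a i * a i) := quadHelper y (fun i => p i * 1) x x
    have H4 : ∑ k, y k * ∑ l, (∑ i, (p i * ∑ j, p j) * (x i k * x i l)) * y l
        = ∑ i, (p i * ∑ j, p j) * (a i * a i) :=
      quadHelper y (fun i => p i * ∑ j, p j) x x
    rw [H1, H2, H3, H4]
    have hw : ∑ l, (∑ j, p j * x j l) * y l = ∑ j, p j * a j := by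
      simp only [Finset.sum_mul]
      rw [Finset.sum_comm]
      refine Finset.sum_congr rfl fun j _ => ?_
      rw [Finset.mul_sum]
      exact Finset.sum_congr rfl fun l _ => by ring
    rw [hw]
    have hT : ∑ i, p i * (a i * ∑ j, p j * a j) = (∑ i, p i * a i) * (∑ j, p j * a j) := by
      rw [Finset.sum_mul]
      exact Finset.sum_congr rfl fun i _ => by ring
    have hS : ∑ i, (p i * ∑ j, p j) * (a i * a i)
        = (∑ j, p j) * ∑ i, p i * (a i * a i) := by
      rw [Finset.mul_sum]
      exact Finset.sum_congr rfl fun i _ => by ring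
    have hA : ∑ i, p i * 1 * (a i * a i) = ∑ i, p i * (a i * a i) :=
      Finset.sum_congr rfl fun i _ => by ring
    rw [hT, hS, hA]
    have cs := Finset.sum_mul_sq_le_sq_mul_sq Finset.univ
      (fun i => Real.sqrt (p i)) (fun i => Real.sqrt (p i) * a i)
    have e1 : ∀ i : Fin m, Real.sqrt (p i) * (Real.sqrt (p i) * a i) = p i * a i := fun i => by
      rw [← mul_assoc, Real.mul_self_sqrt (hp0 i)]
    have e2 : ∀ i : Fin m, Real.sqrt (p i) ^ 2 = p i := fun i => Real.sq_sqrt (hp0 i)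
    have e3 : ∀ i : Fin m, (Real.sqrt (p i) * a i) ^ 2 = p i * (a i * a i) := fun i => by
      rw [mul_pow, Real.sq_sqrt (hp0 i)]; ring
    simp only [e1, e2, e3] at cs
    nlinarith [cs]
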